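/- Let T(x) := sSup {T ∈ ℝ : T^3 − x·T − 2 = 0} denote the greatest real root of the cubic T^3 − x·T − 2. Then T(x) − √x = O(1/x) as x → +∞, i.e., the function x ↦ T(x) − Real.sqrt x is big-O of x ↦ 1/x along the filter atTop on ℝ. -/
import Mathlib


/-- With `T(x) := sSup {T | T^3 - x T - 2 = 0}` the greatest real root,
`T(x) - √x = O(1/x)` as `x → +∞`. -/
theorem statement6 :
    (fun x : ℝ => sSup {T : ℝ | T ^ 3 - x * T - 2 = 0} - Real.sqrt x)
      =O[Filter.atTop] (fun x : ℝ => 1 / x) := by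
  rw [Asymptotics.isBigO_iff]
  refine ⟨2, ?_⟩
  filter_upwards [Filter.eventually_ge_atTop (1:ℝ)] with x hx
  have hx0 : (0:ℝ) < x := by linarith
  set a := Real.sqrt x with ha_def
  have ha2 : a ^ 2 = x := Real.sq_sqrt hx0.le
  have ha1 : 1 ≤ a := by
    rw [ha_def]
    rw [show (1:ℝ) = Real.sqrt 1 by simp]
    exact Real.sqrt_le_sqrt hx
  have ha0 : 0 < a := by linarith
  set e := 2 / x with he_def
  have he0 : 0 < e := by positivity
  have hxe : x * e = 2 := by rw [he_def]; field_simp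
  set b := a + e with hb_def
  have ha3 : a ^ 3 = x * a := by linear_combination a * ha2
  have hfb_eq : b ^ 3 - x * b - 2 = 2 + 3 * (a * e ^ 2) + e ^ 3 := by
    rw [hb_def]; linear_combination (a + 3 * e) * ha2 + 2 * hxe
  have hfb : 0 < b ^ 3 - x * b - 2 := by
    have h1 : 0 < a * e ^ 2 := by positivity
    have h2 : 0 < e ^ 3 := by positivity
    linarith
  set S := {T : ℝ | T ^ 3 - x * T - 2 = 0} with hS_def
  have hcont : ContinuousOn (fun T : ℝ => T ^ 3 - x * T - 2) (Set.Icc a b) := by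
    apply Continuous.continuousOn; continuity
  have hab : a ≤ b := by linarith
  have h0mem : (0:ℝ) ∈ Set.Icc (a ^ 3 - x * a - 2) (b ^ 3 - x * b - 2) := by
    constructor
    · linarith
    · linarith
  obtain ⟨r, hr_mem, hr⟩ := intermediate_value_Icc hab hcont h0mem
  have hrS : r ∈ S := hr
  have hbdd : ∀ T ∈ S, T ≤ b := by
    intro T hT
    by_contra hc
    push_neg at hc
    have hT' : T ^ 3 - x * T - 2 = 0 := hT
    have hTb : 0 < T - b := by linarith
    have hpos : 0 < T ^ 2 + T * b + b ^ 2 - x := by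
      nlinarith [mul_pos ha0 he0, sq_nonneg e]
    nlinarith [mul_pos hTb hpos]
  have hsup_le : sSup S ≤ b := csSup_le ⟨r, hrS⟩ hbdd
  have hle_sup : a ≤ sSup S := le_trans hr_mem.1 (le_csSup ⟨b, hbdd⟩ hrS)
  have habs : |sSup S - a| ≤ e := abs_le.2 ⟨by linarith, by linarith⟩
  rw [Real.norm_eq_abs, Real.norm_eq_abs, abs_of_pos (by positivity : (0:ℝ) < 1 / x)]
  have : e = 2 * (1 / x) := by rw [he_def]; ring
  linarith [habs]
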